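/- Let X be a set and let 𝒜, ℬ be collections of subsets of X. If 𝒜 is almost-Γ-like and ℬ is Γ-like, then α₂(𝒜,ℬ) holds if and only if Player I has no winning predetermined strategy in the selection game G₁(𝒜,ℬ). -/
import Mathlib


open Set

/-- A collection `𝒜` of subsets of `X` is Γ-like if every member is infinite
and every infinite subset of a member is itself a member. -/
def GammaLike {X : Type*} (𝒜 : Set (Set X)) : Prop :=
  ∀ A ∈ 𝒜, A.Infinite ∧ ∀ A' ⊆ A, A'.Infinite → A' ∈ 𝒜

/-- A collection `𝒜` is almost-Γ-like if each `A ∈ 𝒜` has a countably infinite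
subset `A'` all of whose cofinite subsets belong to `𝒜`. -/
def AlmostGammaLike {X : Type*} (𝒜 : Set (Set X)) : Prop :=
  ∀ A ∈ 𝒜, ∃ A' ⊆ A, A'.Countable ∧ A'.Infinite ∧
    ∀ A'' ⊆ A', (A' \ A'').Finite → A'' ∈ 𝒜

/-- `𝒜` is closed under finite unions. -/
def UnionClosed {X : Type*} (𝒜 : Set (Set X)) : Prop :=
  ∀ A ∈ 𝒜, ∀ B ∈ 𝒜, A ∪ B ∈ 𝒜

/-- α₁(𝒜,ℬ): for every sequence from 𝒜 there is `B ∈ ℬ` with `A n \ B` finite for all `n`. -/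
def Alpha1 {X : Type*} (𝒜 ℬ : Set (Set X)) : Prop :=
  ∀ A : ℕ → Set X, (∀ n, A n ∈ 𝒜) → ∃ B ∈ ℬ, ∀ n, (A n \ B).Finite

/-- α₂(𝒜,ℬ): for every sequence from 𝒜 there is `B ∈ ℬ` meeting each `A n` infinitely. -/
def Alpha2 {X : Type*} (𝒜 ℬ : Set (Set X)) : Prop :=
  ∀ A : ℕ → Set X, (∀ n, A n ∈ 𝒜) → ∃ B ∈ ℬ, ∀ n, (A n ∩ B).Infinite

/-- α₂'(𝒜,ℬ): for every sequence from 𝒜 there is `B ∈ ℬ` meeting each `A n`. -/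
def Alpha2' {X : Type*} (𝒜 ℬ : Set (Set X)) : Prop :=
  ∀ A : ℕ → Set X, (∀ n, A n ∈ 𝒜) → ∃ B ∈ ℬ, ∀ n, (A n ∩ B).Nonempty

/-- α₃(𝒜,ℬ): for every sequence from 𝒜 there is `B ∈ ℬ` meeting infinitely many `A n` infinitely. -/
def Alpha3 {X : Type*} (𝒜 ℬ : Set (Set X)) : Prop :=
  ∀ A : ℕ → Set X, (∀ n, A n ∈ 𝒜) → ∃ B ∈ ℬ, {n | (A n ∩ B).Infinite}.Infinite

/-- α₄(𝒜,ℬ): for every sequence from 𝒜 there is `B ∈ ℬ` meeting infinitely many `A n`. -/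
def Alpha4 {X : Type*} (𝒜 ℬ : Set (Set X)) : Prop :=
  ∀ A : ℕ → Set X, (∀ n, A n ∈ 𝒜) → ∃ B ∈ ℬ, {n | (A n ∩ B).Nonempty}.Infinite

/-- α_{1.1}(𝒜,ℬ): α₁ restricted to pairwise disjoint sequences. -/
def Alpha1p1 {X : Type*} (𝒜 ℬ : Set (Set X)) : Prop :=
  ∀ A : ℕ → Set X, (∀ n, A n ∈ 𝒜) → (∀ m n, m ≠ n → Disjoint (A m) (A n)) →
    ∃ B ∈ ℬ, ∀ n, (A n \ B).Finite

/-- α_{1.5}(𝒜,ℬ): for pairwise disjoint sequences from 𝒜 there is `B ∈ ℬ` with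
`A n \ B` finite for infinitely many `n`. -/
def Alpha1p5 {X : Type*} (𝒜 ℬ : Set (Set X)) : Prop :=
  ∀ A : ℕ → Set X, (∀ n, A n ∈ 𝒜) → (∀ m n, m ≠ n → Disjoint (A m) (A n)) →
    ∃ B ∈ ℬ, {n | (A n \ B).Finite}.Infinite

/-- α_{2.1}(𝒜,ℬ): α₂ restricted to pairwise disjoint sequences. -/
def Alpha2p1 {X : Type*} (𝒜 ℬ : Set (Set X)) : Prop :=
  ∀ A : ℕ → Set X, (∀ n, A n ∈ 𝒜) → (∀ m n, m ≠ n → Disjoint (A m) (A n)) →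
    ∃ B ∈ ℬ, ∀ n, (A n ∩ B).Infinite

/-- α_{3.1}(𝒜,ℬ): α₃ restricted to pairwise disjoint sequences. -/
def Alpha3p1 {X : Type*} (𝒜 ℬ : Set (Set X)) : Prop :=
  ∀ A : ℕ → Set X, (∀ n, A n ∈ 𝒜) → (∀ m n, m ≠ n → Disjoint (A m) (A n)) →
    ∃ B ∈ ℬ, {n | (A n ∩ B).Infinite}.Infinite

/-- α_{4.1}(𝒜,ℬ): α₄ restricted to pairwise disjoint sequences. -/
def Alpha4p1 {X : Type*} (𝒜 ℬ : Set (Set X)) : Prop :=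
  ∀ A : ℕ → Set X, (∀ n, A n ∈ 𝒜) → (∀ m n, m ≠ n → Disjoint (A m) (A n)) →
    ∃ B ∈ ℬ, {n | (A n ∩ B).Nonempty}.Infinite

/-- Player I has a winning predetermined strategy in G₁(𝒜,ℬ). -/
def PredWinG1 {X : Type*} (𝒜 ℬ : Set (Set X)) : Prop :=
  ∃ A : ℕ → Set X, (∀ n, A n ∈ 𝒜) ∧
    ∀ a : ℕ → X, (∀ n, a n ∈ A n) → Set.range a ∉ ℬ

/-- Player I has a winning predetermined strategy in G_fin(𝒜,ℬ). -/
def PredWinGfin {X : Type*} (𝒜 ℬ : Set (Set X)) : Prop :=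
  ∃ A : ℕ → Set X, (∀ n, A n ∈ 𝒜) ∧
    ∀ F : ℕ → Set X, (∀ n, (F n).Finite ∧ F n ⊆ A n) → (⋃ n, F n) ∉ ℬ

/-- Player I has a winning predetermined strategy in G_{<2}(𝒜,ℬ),
where II picks at most one point each round. -/
def PredWinGlt2 {X : Type*} (𝒜 ℬ : Set (Set X)) : Prop :=
  ∃ A : ℕ → Set X, (∀ n, A n ∈ 𝒜) ∧
    ∀ F : ℕ → Set X, (∀ n, (F n).Subsingleton ∧ F n ⊆ A n) → (⋃ n, F n) ∉ ℬ

/-- Player I has a winning predetermined strategy in G_cf(𝒜,ℬ),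
where II picks a cofinite subset each round. -/
def PredWinGcf {X : Type*} (𝒜 ℬ : Set (Set X)) : Prop :=
  ∃ A : ℕ → Set X, (∀ n, A n ∈ 𝒜) ∧
    ∀ B : ℕ → Set X, (∀ n, B n ⊆ A n ∧ (A n \ B n).Finite) → (⋃ n, B n) ∉ ℬ

/-- Player I has a winning perfect-information strategy in G₁(𝒜,ℬ):
a function from finite sequences of points of X into 𝒜 defeating all counterplays. -/
def WinG1 {X : Type*} (𝒜 ℬ : Set (Set X)) : Prop :=
  ∃ σ : List X → Set X, (∀ s, σ s ∈ 𝒜) ∧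
    ∀ a : ℕ → X, (∀ n, a n ∈ σ (List.ofFn fun i : Fin n => a i)) → Set.range a ∉ ℬ

/-- Player I has a winning perfect-information strategy in G_fin(𝒜,ℬ):
a function from finite sequences of finite subsets of X into 𝒜 defeating all counterplays. -/
def WinGfin {X : Type*} (𝒜 ℬ : Set (Set X)) : Prop :=
  ∃ σ : List (Set X) → Set X, (∀ s : List (Set X), (∀ F ∈ s, F.Finite) → σ s ∈ 𝒜) ∧
    ∀ F : ℕ → Set X,
      (∀ n, (F n).Finite ∧ F n ⊆ σ (List.ofFn fun i : Fin n => F i)) →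
      (⋃ n, F n) ∉ ℬ

/-- Player I has a winning perfect-information strategy in G_{<2}(𝒜,ℬ):
a function from finite sequences of at-most-singleton subsets of X into 𝒜
defeating all counterplays. -/
def WinGlt2 {X : Type*} (𝒜 ℬ : Set (Set X)) : Prop :=
  ∃ σ : List (Set X) → Set X, (∀ s : List (Set X), (∀ F ∈ s, F.Subsingleton) → σ s ∈ 𝒜) ∧
    ∀ F : ℕ → Set X,
      (∀ n, (F n).Subsingleton ∧ F n ⊆ σ (List.ofFn fun i : Fin n => F i)) →
      (⋃ n, F n) ∉ ℬ

noncomputable def pickList {X : Type*} (f : ℕ → List X → X) : ℕ → List X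
  | 0 => []
  | n+1 => pickList f n ++ [f n (pickList f n)]

lemma exists_injective_selection {X : Type*} (C : ℕ → Set X)
    (hC : ∀ n, (C n).Infinite) :
    ∃ a : ℕ → X, (∀ n, a n ∈ C n) ∧ Function.Injective a := by
  have key : ∀ (n : ℕ) (l : List X), ((C n) \ {x | x ∈ l}).Nonempty :=
    fun n l => ((hC n).diff (l.finite_toSet)).nonempty
  choose f hf using key
  refine ⟨fun n => f n (pickList f n), fun n => (hf n _).1, ?_⟩
  have hmem : ∀ n i, i < n → f i (pickList f i) ∈ pickList f n := by
    intro n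
    induction n with
    | zero => intro i h; omega
    | succ m ih =>
      intro i h
      rcases Nat.lt_succ_iff_lt_or_eq.mp h with h' | h'
      · simp [pickList, List.mem_append]; exact Or.inl (ih i h')
      · subst h'; simp [pickList]
  intro i j hij
  simp only at hij
  by_contra hne
  rcases Nat.lt_or_ge i j with h | h
  · exact (hf j (pickList f j)).2 (hij ▸ hmem j i h)
  · have h' : j < i := lt_of_le_of_ne h (Ne.symm hne)
    exact (hf i (pickList f i)).2 (hij.symm ▸ hmem i j h')


/-- If 𝒜 is almost-Γ-like and ℬ is Γ-like, then α₂(𝒜,ℬ) holds iff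
Player I has no winning predetermined strategy in G₁(𝒜,ℬ). -/
theorem stmt0 {X : Type*} (𝒜 ℬ : Set (Set X))
    (hA : AlmostGammaLike 𝒜) (hB : GammaLike ℬ) :
    Alpha2 𝒜 ℬ ↔ ¬ PredWinG1 𝒜 ℬ := by
  constructor
  · -- Alpha2 → no winning predetermined strategy
    rintro h2 ⟨A, hAmem, hwin⟩
    obtain ⟨B, hBB, hBi⟩ := h2 A hAmem
    obtain ⟨a, ha, hinj⟩ := exists_injective_selection (fun n => A n ∩ B) hBi
    refine hwin a (fun n => (ha n).1) ?_
    exact (hB B hBB).2 (range a) (range_subset_iff.mpr fun n => (ha n).2)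
      (infinite_range_of_injective hinj)
  · -- no winning strategy → Alpha2
    intro hn A hAmem
    choose A' hsub hcnt hinf hcof using fun n => hA (A n) (hAmem n)
    choose f hfr using fun n => (hcnt n).exists_eq_range (hinf n).nonempty
    -- the strategy
    set C : ℕ → Set X := fun k =>
      A' k.unpair.1 \ (f k.unpair.1 '' Set.Iio k.unpair.2) with hC
    have hCmem : ∀ k, C k ∈ 𝒜 := by
      intro k
      refine hcof _ _ diff_subset ?_
      have : A' k.unpair.1 \ C k ⊆ f k.unpair.1 '' Set.Iio k.unpair.2 := by
        intro x hx
        simp only [hC, mem_diff, not_and, not_not] at hx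
        exact hx.2 hx.1
      exact Finite.subset ((finite_Iio _).image _) this
    -- since the strategy is not winning, extract a defeating play
    have hex : ∃ a : ℕ → X, (∀ k, a k ∈ C k) ∧ Set.range a ∈ ℬ := by
      by_contra h
      push_neg at h
      exact hn ⟨C, hCmem, fun a hak => h a hak⟩
    obtain ⟨a, ha, haB⟩ := hex
    refine ⟨range a, haB, fun n => ?_⟩
    set t : ℕ → X := fun j => a (Nat.pair n j) with ht
    have htmem : ∀ j, t j ∈ A' n \ (f n '' Set.Iio j) := by
      intro j
      have := ha (Nat.pair n j)
      simpa [hC, ht, Nat.unpair_pair] using this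
    have hsub' : range t ⊆ A n ∩ range a := by
      rintro x ⟨j, rfl⟩
      exact ⟨hsub n (htmem j).1, mem_range_self _⟩
    refine Infinite.mono hsub' ?_
    intro hfin
    -- range t is a finite subset of A' n = range (f n); derive a contradiction
    classical
    set φ : X → ℕ := fun x => if h : ∃ i, f n i = x then h.choose else 0 with hφ
    have hφs : ∀ x ∈ A' n, f n (φ x) = x := by
      intro x hx
      have hx' : ∃ i, f n i = x := by
        rw [hfr n] at hx; exact hx
      simp only [hφ, dif_pos hx']
      exact hx'.choose_spec
    have himg : (φ '' range t).Finite := hfin.image _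
    obtain ⟨J, hJ⟩ := himg.bddAbove
    have hmem' : t (J+1) ∈ f n '' Set.Iio (J+1) := by
      refine ⟨φ (t (J+1)), ?_, hφs _ (htmem (J+1)).1⟩
      have : φ (t (J+1)) ≤ J := hJ ⟨t (J+1), mem_range_self _, rfl⟩
      simpa [Set.mem_Iio] using Nat.lt_succ_of_le this
    exact (htmem (J+1)).2 hmem'
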